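/- For real numbers α and β with α ≠ 1, the sequence (k² + αk + β)_{k=0}^∞ is not a Legendre multiplier sequence. -/

import Mathlib

open Polynomial

/-- A real polynomial is *hyperbolic* if all of its complex roots are real
(the zero polynomial and nonzero constants are vacuously hyperbolic). -/
def Hyperbolic (p : Polynomial ℝ) : Prop :=
  ∀ z ∈ (p.map (algebraMap ℝ ℂ)).roots, z.im = 0

/-- `γ` is a multiplier sequence for the simple set `q`: the linear operator
sending `q k` to `γ k • q k` maps hyperbolic polynomials to hyperbolic
polynomials.  (Since `q` is a simple set, every real polynomial has a unique
expansion `∑ a k • q k`, so this quantification over coefficient families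
expresses exactly that property.) -/
def IsMultiplierSeqFor (q : ℕ → Polynomial ℝ) (γ : ℕ → ℝ) : Prop :=
  ∀ (n : ℕ) (a : ℕ → ℝ),
    Hyperbolic (∑ k ∈ Finset.range n, C (a k) * q k) →
    Hyperbolic (∑ k ∈ Finset.range n, C (γ k * a k) * q k)

/-- The Legendre polynomials, via Rodrigues' formula
`Le n = (1/(2^n n!)) Dⁿ[(x²-1)ⁿ]`. -/
noncomputable def legendre (n : ℕ) : Polynomial ℝ :=
  C (1 / (2 ^ n * n.factorial : ℝ)) * derivative^[n] ((X ^ 2 - 1) ^ n)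

/-- A Legendre multiplier sequence. -/
def IsLegendreMS (γ : ℕ → ℝ) : Prop := IsMultiplierSeqFor legendre γ

lemma leg0 : legendre 0 = 1 := by simp [legendre]

lemma leg1 : legendre 1 = X := by
  have h : ((X^2-1 : ℝ[X])^1) = X^2 - 1 := by ring
  simp [legendre, h]
  rw [one_add_one_eq_two, ← C_ofNat, ← mul_assoc, ← C_mul]; norm_num

lemma leg2 : legendre 2 = C (3/2) * X^2 - C (1/2) := by
  have h : ((X^2-1 : ℝ[X])^2) = X^4 - C 2 * X^2 + 1 := by
    simp only [map_ofNat]; ring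
  rw [legendre, h]
  simp only [Function.iterate_succ, Function.iterate_zero, Function.comp_apply, id_eq,
    derivative_add, derivative_sub, derivative_C_mul, derivative_X_pow, derivative_one,
    derivative_C, derivative_X, derivative_mul]
  norm_num
  simp only [mul_sub, mul_add, ← mul_assoc, ← C_mul]
  norm_num

lemma leg3 : legendre 3 = C (5/2) * X^3 - C (3/2) * X := by
  have h : ((X^2-1 : ℝ[X])^3) = X^6 - C 3 * X^4 + C 3 * X^2 - 1 := by
    simp only [map_ofNat]; ring
  rw [legendre, h]
  simp only [Function.iterate_succ, Function.iterate_zero, Function.comp_apply, id_eq,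
    derivative_add, derivative_sub, derivative_C_mul, derivative_X_pow, derivative_one,
    derivative_C, derivative_X, derivative_mul]
  norm_num
  simp only [mul_sub, mul_add, ← mul_assoc, ← C_mul]
  norm_num [Nat.factorial]

lemma leg4 : legendre 4 = C (35/8) * X^4 - C (30/8) * X^2 + C (3/8) := by
  have h : ((X^2-1 : ℝ[X])^4) = X^8 - C 4 * X^6 + C 6 * X^4 - C 4 * X^2 + 1 := by
    simp only [map_ofNat]; ring
  rw [legendre, h]
  simp only [Function.iterate_succ, Function.iterate_zero, Function.comp_apply, id_eq,
    derivative_add, derivative_sub, derivative_C_mul, derivative_X_pow, derivative_one,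
    derivative_C, derivative_X, derivative_mul]
  norm_num
  simp only [mul_sub, mul_add, ← mul_assoc, ← C_mul]
  norm_num [Nat.factorial]

/-- Laguerre-type inequality for products of real linear factors. -/
lemma lag_prod (t : ℝ) (s : Multiset ℝ) :
    eval t ((s.map (fun r => X - C r)).prod) *
      eval t (derivative (derivative ((s.map (fun r => X - C r)).prod))) ≤
    (eval t (derivative ((s.map (fun r => X - C r)).prod)))^2 := by
  induction s using Multiset.induction_on with
  | empty => simp
  | cons r s ih =>
    simp only [Multiset.map_cons, Multiset.prod_cons]
    set q := (s.map fun r => X - C r).prod with hq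
    have hd : derivative ((X - C r) * q) = q + (X - C r) * derivative q := by
      simp [derivative_mul]
    have hdd : derivative (derivative ((X - C r) * q)) =
        2 * derivative q + (X - C r) * derivative (derivative q) := by
      rw [hd]
      simp [derivative_mul]
      ring
    rw [hdd, hd]
    simp only [eval_add, eval_mul, eval_sub, eval_X, eval_C, eval_ofNat]
    set A := eval t q
    set B := eval t (derivative q)
    set D := eval t (derivative (derivative q))
    nlinarith [sq_nonneg A, mul_nonneg (sq_nonneg (t - r)) (sub_nonneg.2 ih)]

/-- A hyperbolic real polynomial factors into real linear factors. -/
lemma hyp_factor (p : ℝ[X]) (hp : Hyperbolic p) (hp0 : p ≠ 0) :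
    ∃ (c : ℝ) (s : Multiset ℝ), p = C c * (s.map (fun r => X - C r)).prod := by
  have hinj : Function.Injective (algebraMap ℝ ℂ) := (algebraMap ℝ ℂ).injective
  have hsp : p.map (algebraMap ℝ ℂ) = C (p.map (algebraMap ℝ ℂ)).leadingCoeff *
      ((p.map (algebraMap ℝ ℂ)).roots.map fun a => X - C a).prod :=
    (IsAlgClosed.splits _).eq_prod_roots
  refine ⟨p.leadingCoeff, (p.map (algebraMap ℝ ℂ)).roots.map Complex.re, ?_⟩
  apply Polynomial.map_injective _ hinj
  rw [Polynomial.map_mul, Polynomial.map_C, Polynomial.map_multiset_prod, Multiset.map_map]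
  have hlead : (algebraMap ℝ ℂ) p.leadingCoeff = (p.map (algebraMap ℝ ℂ)).leadingCoeff := by
    rw [Polynomial.leadingCoeff_map_of_injective hinj]
  rw [hlead]
  conv_lhs => rw [hsp]
  congr 1
  rw [Multiset.map_map]
  symm
  congr 1
  apply Multiset.map_congr rfl
  intro z hz
  have him : z.im = 0 := hp z hz
  have hz' : (algebraMap ℝ ℂ) z.re = z := by
    apply Complex.ext <;> simp [him]
  simp only [Function.comp_apply, Polynomial.map_sub, Polynomial.map_X, Polynomial.map_C, hz']

/-- Laguerre's inequality for hyperbolic polynomials. -/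
lemma laguerre (p : ℝ[X]) (hp : Hyperbolic p) (t : ℝ) :
    eval t p * eval t (derivative (derivative p)) ≤ (eval t (derivative p))^2 := by
  by_cases hp0 : p = 0
  · simp [hp0]
  obtain ⟨c, s, rfl⟩ := hyp_factor p hp hp0
  simp only [derivative_C_mul, eval_mul, eval_C]
  have := lag_prod t s
  nlinarith [sq_nonneg c, sq_nonneg (eval t (derivative ((s.map fun r => X - C r)).prod))]

theorem stmt_13 (α β : ℝ) (hα : α ≠ 1) :
    ¬ IsLegendreMS (fun k => (k : ℝ) ^ 2 + α * k + β) := by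
  intro h
  set a : ℕ → ℝ := fun k =>
    if k = 0 then 16/5 else if k = 1 then -32/5 else if k = 2 then 32/7
    else if k = 3 then -8/5 else if k = 4 then 8/35 else 0 with ha
  have hP : (∑ k ∈ Finset.range 5, C (a k) * legendre k) = (X - 1)^4 := by
    apply Polynomial.funext; intro x
    simp [Finset.sum_range_succ, ha, leg0, leg1, leg2, leg3, leg4]
    ring
  have hPhyp : Hyperbolic (∑ k ∈ Finset.range 5, C (a k) * legendre k) := by
    rw [hP]
    intro z hz
    have hmap : ((X - 1 : ℝ[X])^4).map (algebraMap ℝ ℂ) = (X - C 1)^4 := by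
      simp [Polynomial.map_pow, Polynomial.map_sub]
    rw [hmap] at hz
    rw [Polynomial.roots_pow, Polynomial.roots_X_sub_C] at hz
    have : z = 1 := by
      have := Multiset.mem_of_mem_nsmul hz
      simpa using this
    simp [this]
  have hQhyp := h 5 a hPhyp
  set γ : ℕ → ℝ := fun k => (k : ℝ) ^ 2 + α * k + β with hγ
  have hQ : (∑ k ∈ Finset.range 5, C (γ k * a k) * legendre k) =
      C (16 + 4*α + β) * X^4 + C (-36 - 12*α - 4*β) * X^3 +
      C (96/7 + 72/7*α + 6*β) * X^2 + C (76/5 + 4/5*α - 4*β) * X +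
      C (-272/35 - 148/35*α + β) := by
    apply Polynomial.funext; intro x
    simp [Finset.sum_range_succ, ha, hγ, leg0, leg1, leg2, leg3, leg4]
    ring
  rw [hQ] at hQhyp
  have lag := laguerre _ hQhyp 1
  simp only [derivative_add, derivative_C_mul, derivative_X_pow, derivative_C, derivative_X,
    eval_add, eval_mul, eval_C, eval_X, eval_pow, eval_one, eval_ofNat, eval_natCast,
    mul_zero, add_zero, zero_add, one_pow, mul_one] at lag
  push_cast at lag
  have hne : (0:ℝ) < (α - 1)^2 :=
    lt_of_le_of_ne (sq_nonneg _) (Ne.symm (pow_ne_zero 2 (sub_ne_zero.mpr hα)))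
  nlinarith [lag, hne]
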